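/- Let d ≥ 2 and k : ℤ^d → [0,1] with connected E_k. Suppose that for every exhaustion (Λ_R) the killed random walk conditioned to hit Λ_R^c before Δ converges in distribution (in the sense of finite-dimensional distributions of the first n steps) to a limit independent of the exhaustion. Then there exists a function a : ℤ^d → ℝ, positive on E_k, such that for all x, y ∈ E_k and every exhaustion, P_y[τ(Λ_R^c) < τ(Δ)] / P_x[τ(Λ_R^c) < τ(Δ)] → a(y)/a(x) as R → ∞, and a is massive harmonic on E_k: a(x) = ((1−k(x))/(2d)) Σ_{y~x} a(y). -/

import Mathlib

open scoped BigOperators Classical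

namespace KRW

abbrev V (d : ℕ) := Fin d → ℤ

def IsNbr {d : ℕ} (x y : V d) : Prop := (∑ i, |x i - y i|) = 1

noncomputable def znorm {d : ℕ} (x : V d) : ℝ := Real.sqrt (∑ i, ((x i : ℝ))^2)

noncomputable def stepWt {d : ℕ} (k : V d → ℝ) (x y : V d) : ℝ :=
  if IsNbr x y then (1 - k x) / (2 * d) else 0

noncomputable def pathWt {d : ℕ} (k : V d → ℝ) (n : ℕ) (γ : Fin (n + 1) → V d) : ℝ :=
  ∏ i : Fin n, stepWt k (γ i.castSucc) (γ i.succ)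

/-- `P_x[τ(Λᶜ) < τ(Δ)]`. -/
noncomputable def exitProb {d : ℕ} (k : V d → ℝ) (Λ : Set (V d)) (x : V d) : ℝ :=
  ∑' n : ℕ, ∑' γ : Fin (n + 1) → V d,
    if γ 0 = x ∧ (∀ i : Fin n, γ i.castSucc ∈ Λ) ∧ γ (Fin.last n) ∉ Λ then pathWt k n γ else 0

def IsExhaustion {d : ℕ} (Λ : ℕ → Set (V d)) : Prop :=
  (∀ R, (Λ R).Finite) ∧ Monotone Λ ∧ ∀ x : V d, ∃ R, x ∈ Λ R

def Ek {d : ℕ} (k : V d → ℝ) : Set (V d) :=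
  {x | ∃ p : ℕ → V d, p 0 = x ∧ (∀ i, IsNbr (p i) (p (i + 1))) ∧ (∀ i, k (p i) < 1) ∧
    Filter.Tendsto (fun i => znorm (p i)) Filter.atTop Filter.atTop}

def EkConnected {d : ℕ} (k : V d → ℝ) : Prop :=
  ∀ x ∈ Ek k, ∀ y ∈ Ek k, ∃ (n : ℕ) (p : Fin (n + 1) → V d),
    p 0 = x ∧ p (Fin.last n) = y ∧ (∀ i : Fin n, IsNbr (p i.castSucc) (p i.succ)) ∧
    ∀ i, p i ∈ Ek k

noncomputable def srwWt {d : ℕ} (n : ℕ) (s : Fin (n + 1) → V d) : ℝ :=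
  ∏ i : Fin n, (if IsNbr (s i.castSucc) (s i.succ) then 1 / (2 * (d : ℝ)) else 0)

noncomputable def killWt {d : ℕ} (k : V d → ℝ) (n : ℕ) (s : Fin (n + 1) → V d) : ℝ :=
  ∏ i : Fin n, (1 - k (s i.castSucc))

noncomputable def jointExitProb {d : ℕ} (k : V d → ℝ) (Λ : Set (V d)) (n : ℕ)
    (s : Fin (n + 1) → V d) : ℝ :=
  pathWt k n s * (if ∀ i, s i ∈ Λ then exitProb k Λ (s (Fin.last n)) else 1)


open Filter Topology

variable {d : ℕ}

lemma isNbr_symm {x y : V d} (h : IsNbr x y) : IsNbr y x := by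
  unfold IsNbr at *
  rw [← h]
  exact Finset.sum_congr rfl fun i _ => abs_sub_comm _ _

lemma stepWt_nonneg {k : V d → ℝ} (hk : ∀ x, k x ∈ Set.Icc (0:ℝ) 1) (x y : V d) :
    0 ≤ stepWt k x y := by
  unfold stepWt
  split
  · exact div_nonneg (by linarith [(hk x).2]) (by positivity)
  · exact le_refl _

lemma stepWt_le {k : V d → ℝ} (hk : ∀ x, k x ∈ Set.Icc (0:ℝ) 1) (hd : 0 < d) (x y : V d) :
    stepWt k x y ≤ 1 / (2 * d) := by
  unfold stepWt
  have h2d : (0:ℝ) < 2 * d := by positivity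
  split
  · gcongr
    · linarith [(hk x).1]
  · positivity

lemma stepWt_eq_zero {k : V d → ℝ} {x y : V d} (h : ¬ IsNbr x y) : stepWt k x y = 0 :=
  if_neg h

lemma pathWt_nonneg {k : V d → ℝ} (hk : ∀ x, k x ∈ Set.Icc (0:ℝ) 1) (n : ℕ)
    (γ : Fin (n+1) → V d) : 0 ≤ pathWt k n γ :=
  Finset.prod_nonneg fun i _ => stepWt_nonneg hk _ _


/-- The finset of candidate neighbours of `x`. -/
noncomputable def nbrsF (x : V d) : Finset (V d) :=
  (Finset.univ ×ˢ ({1, -1} : Finset ℤ)).image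
    (fun p : Fin d × ℤ => Function.update x p.1 (x p.1 + p.2))

lemma mem_nbrsF_of_isNbr {x y : V d} (h : IsNbr x y) : y ∈ nbrsF x := by
  classical
  unfold IsNbr at h
  set s : Finset (Fin d) := Finset.univ.filter (fun i => x i ≠ y i) with hs
  have hsum : ∑ i ∈ s, |x i - y i| = 1 := by
    rw [← h]
    refine Finset.sum_subset (Finset.filter_subset _ _) fun i _ hi => ?_
    rw [hs] at hi
    simp only [Finset.mem_filter, Finset.mem_univ, true_and, not_not] at hi
    rw [hi, sub_self, abs_zero]
  have hcard1 : s.card • (1:ℤ) ≤ ∑ i ∈ s, |x i - y i| := by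
    refine Finset.card_nsmul_le_sum s _ 1 fun i hi => ?_
    have : x i ≠ y i := (Finset.mem_filter.mp hi).2
    have : x i - y i ≠ 0 := sub_ne_zero.mpr this
    exact Int.one_le_abs (by simpa using this)
  have hne : s.Nonempty := by
    by_contra hemp
    rw [Finset.not_nonempty_iff_eq_empty] at hemp
    rw [hemp, Finset.sum_empty] at hsum
    exact one_ne_zero hsum.symm
  have hcard : s.card = 1 := by
    have h1 : (s.card : ℤ) ≤ 1 := by simpa [hsum] using hcard1
    have h2 : 1 ≤ s.card := Finset.card_pos.mpr hne
    omega
  obtain ⟨i, hi⟩ := Finset.card_eq_one.mp hcard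
  have hmem : ∀ j, j ≠ i → x j = y j := by
    intro j hj
    by_contra hxy
    have : j ∈ s := Finset.mem_filter.mpr ⟨Finset.mem_univ _, hxy⟩
    rw [hi, Finset.mem_singleton] at this
    exact hj this
  have habs : |x i - y i| = 1 := by
    rw [hi, Finset.sum_singleton] at hsum
    exact hsum
  have hyi : y i = x i + 1 ∨ y i = x i + (-1) := by
    rcases abs_eq (by norm_num : (0:ℤ) ≤ 1) |>.mp habs with h' | h'
    · right; omega
    · left; omega
  have hupd : ∀ c : ℤ, y i = x i + c → y = Function.update x i (x i + c) := by
    intro c hc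
    funext j
    by_cases hji : j = i
    · subst hji; rw [Function.update_self, ← hc]
    · rw [Function.update_of_ne hji, ← hmem j hji]
  apply Finset.mem_image.mpr
  rcases hyi with hc | hc
  · exact ⟨(i, 1), by simp, (hupd 1 hc).symm⟩
  · exact ⟨(i, -1), by simp, (hupd (-1) hc).symm⟩

lemma card_nbrsF_le (x : V d) : (nbrsF x).card ≤ 2 * d := by
  calc (nbrsF x).card ≤ (Finset.univ (α := Fin d) ×ˢ ({1, -1} : Finset ℤ)).card :=
        Finset.card_image_le
    _ ≤ 2 * d := by
        rw [Finset.card_product]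
        simp [Finset.card_univ]
        omega

lemma not_isNbr_of_not_mem {x y : V d} (h : y ∉ nbrsF x) : ¬ IsNbr x y :=
  fun hn => h (mem_nbrsF_of_isNbr hn)

/-- The set of nearest-neighbour paths of length `n` started at `x`. -/
def pathSet (n : ℕ) (x : V d) : Set (Fin (n+1) → V d) :=
  {γ | γ 0 = x ∧ ∀ i : Fin n, IsNbr (γ i.castSucc) (γ i.succ)}

/-- The cons equivalence. -/
def consEquiv (n : ℕ) : (V d × (Fin (n+1) → V d)) ≃ (Fin (n+2) → V d) where
  toFun p := Fin.cons p.1 p.2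
  invFun γ := (γ 0, Fin.tail γ)
  left_inv p := by simp [Fin.tail_cons]
  right_inv γ := Fin.cons_self_tail γ

lemma pathSet_finite (n : ℕ) (x : V d) : (pathSet n x).Finite := by
  induction n generalizing x with
  | zero =>
      apply Set.Finite.subset (Set.finite_singleton (fun _ : Fin 1 => x))
      intro γ hγ
      have : γ = fun _ => x := by
        funext i
        have : i = 0 := Subsingleton.elim i 0
        rw [this, hγ.1]
      simp [this]
  | succ n ih =>
      apply Set.Finite.subset
        (Set.Finite.image (fun t => Fin.cons x t)
          (Set.Finite.biUnion (nbrsF x).finite_toSet (fun y _ => ih y)))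
      rintro γ ⟨h0, hstep⟩
      refine ⟨Fin.tail γ, ?_, ?_⟩
      · refine Set.mem_biUnion (?_ : γ 1 ∈ (nbrsF x : Set (V d))) ?_
        · apply mem_nbrsF_of_isNbr
          have := hstep 0
          rwa [Fin.castSucc_zero, h0, Fin.succ_zero_eq_one] at this
        · constructor
          · show γ (0 : Fin (n+1)).succ = γ 1
            rw [Fin.succ_zero_eq_one]
          · intro i
            have := hstep i.succ
            rwa [← Fin.succ_castSucc] at this
      · rw [← h0]
        exact Fin.cons_self_tail γ

lemma summable_pathFun {n : ℕ} {x : V d} {k : V d → ℝ} (h : (Fin (n+1) → V d) → ℝ)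
    (hh : ∀ γ, h γ ≠ 0 → γ 0 = x ∧ pathWt k n γ ≠ 0) : Summable h := by
  apply summable_of_ne_finset_zero (s := (pathSet_finite n x).toFinset)
  intro γ hγ
  by_contra hne
  apply hγ
  rw [Set.Finite.mem_toFinset]
  obtain ⟨h0, hw⟩ := hh γ hne
  refine ⟨h0, fun i => ?_⟩
  by_contra hnb
  exact hw (Finset.prod_eq_zero (Finset.mem_univ i) (stepWt_eq_zero hnb))

/-- Probability to exit at time exactly `n`. -/
noncomputable def g (k : V d → ℝ) (Λ : Set (V d)) (n : ℕ) (x : V d) : ℝ :=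
  ∑' γ : Fin (n + 1) → V d,
    if γ 0 = x ∧ (∀ i : Fin n, γ i.castSucc ∈ Λ) ∧ γ (Fin.last n) ∉ Λ then pathWt k n γ else 0

lemma exitProb_eq_tsum_g (k : V d → ℝ) (Λ : Set (V d)) (x : V d) :
    exitProb k Λ x = ∑' n, g k Λ n x := rfl

lemma summable_g_inner (k : V d → ℝ) (Λ : Set (V d)) (n : ℕ) (x : V d) :
    Summable (fun γ : Fin (n+1) → V d =>
      if γ 0 = x ∧ (∀ i : Fin n, γ i.castSucc ∈ Λ) ∧ γ (Fin.last n) ∉ Λ then pathWt k n γ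
      else 0) := by
  apply summable_pathFun (x := x) (k := k)
  intro γ hne
  by_cases hc : γ 0 = x ∧ (∀ i : Fin n, γ i.castSucc ∈ Λ) ∧ γ (Fin.last n) ∉ Λ
  · rw [if_pos hc] at hne
    exact ⟨hc.1, hne⟩
  · exact absurd (if_neg hc) hne

lemma g_nonneg {k : V d → ℝ} (hk : ∀ x, k x ∈ Set.Icc (0:ℝ) 1) (Λ : Set (V d)) (n : ℕ)
    (x : V d) : 0 ≤ g k Λ n x := by
  apply tsum_nonneg
  intro γ
  split
  · exact pathWt_nonneg hk n γ
  · exact le_refl _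

lemma g_zero (k : V d → ℝ) (Λ : Set (V d)) (x : V d) :
    g k Λ 0 x = if x ∈ Λ then 0 else 1 := by
  unfold g
  rw [← (Equiv.funUnique (Fin 1) (V d)).symm.tsum_eq]
  have heq : ∀ y : V d,
      (if ((Equiv.funUnique (Fin 1) (V d)).symm y) 0 = x ∧
          (∀ i : Fin 0, ((Equiv.funUnique (Fin 1) (V d)).symm y) i.castSucc ∈ Λ) ∧
          ((Equiv.funUnique (Fin 1) (V d)).symm y) (Fin.last 0) ∉ Λ
        then pathWt k 0 ((Equiv.funUnique (Fin 1) (V d)).symm y) else 0)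
      = if y = x then (if x ∈ Λ then 0 else 1) else 0 := by
    intro y
    have hp : pathWt k 0 ((Equiv.funUnique (Fin 1) (V d)).symm y) = 1 := by
      unfold pathWt; simp
    by_cases hyx : y = x
    · subst hyx
      by_cases hy : y ∈ Λ
      · rw [if_pos rfl, if_pos hy, if_neg]
        simp only [not_and]
        intro _ _
        simpa using hy
      · rw [if_pos rfl, if_neg hy, if_pos, hp]
        exact ⟨rfl, fun i => i.elim0, by simpa using hy⟩
    · rw [if_neg hyx, if_neg]
      simp only [not_and]
      intro h
      exact absurd (by simpa using h) hyx
  rw [tsum_congr heq, tsum_ite_eq]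

lemma g_succ_not_mem (k : V d → ℝ) {Λ : Set (V d)} (n : ℕ) {x : V d} (hx : x ∉ Λ) :
    g k Λ (n+1) x = 0 := by
  unfold g
  convert tsum_zero with γ
  rw [if_neg]
  rintro ⟨h0, hin, -⟩
  apply hx
  have := hin 0
  rwa [Fin.castSucc_zero, h0] at this

lemma pathWt_cons (k : V d → ℝ) (n : ℕ) (y : V d) (t : Fin (n+1) → V d) :
    pathWt k (n+1) (Fin.cons y t) = stepWt k y (t 0) * pathWt k n t := by
  unfold pathWt
  rw [Fin.prod_univ_succ]
  set γ : Fin (n+2) → V d := Fin.cons y t with hγ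
  have h1 : stepWt k (γ ((0 : Fin (n+1)).castSucc)) (γ (0 : Fin (n+1)).succ)
      = stepWt k y (t 0) := by
    rw [hγ, Fin.castSucc_zero, Fin.cons_zero, Fin.cons_succ]
  have h2 : ∀ i : Fin n,
      stepWt k (γ (i.succ.castSucc)) (γ i.succ.succ)
      = stepWt k (t i.castSucc) (t i.succ) := by
    intro i
    rw [hγ, ← Fin.succ_castSucc, Fin.cons_succ, Fin.cons_succ]
  rw [h1]
  exact congrArg _ (Finset.prod_congr rfl fun i _ => h2 i)

set_option maxHeartbeats 1000000 in
lemma g_succ {k : V d → ℝ} {Λ : Set (V d)} {n : ℕ} {x : V d} (hx : x ∈ Λ) :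
    g k Λ (n+1) x = ∑ y ∈ nbrsF x, stepWt k x y * g k Λ n y := by
  classical
  set F : (Fin (n+2) → V d) → ℝ := fun γ =>
    if γ 0 = x ∧ (∀ i : Fin (n+1), γ i.castSucc ∈ Λ) ∧ γ (Fin.last (n+1)) ∉ Λ
      then pathWt k (n+1) γ else 0 with hF
  set H : (Fin (n+1) → V d) → ℝ := fun t =>
    if (∀ i : Fin n, t i.castSucc ∈ Λ) ∧ t (Fin.last n) ∉ Λ
      then stepWt k x (t 0) * pathWt k n t else 0 with hH
  have hFsum : Summable F := by
    rw [hF]; exact summable_g_inner k Λ (n+1) x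
  have hsum : Summable (fun p : V d × (Fin (n+1) → V d) => F (consEquiv n p)) :=
    ((consEquiv n).summable_iff (f := F)).mpr hFsum
  have hcons : ∀ (y : V d) (t : Fin (n+1) → V d), consEquiv n (y, t) = Fin.cons y t :=
    fun _ _ => rfl
  have hinner : ∀ y : V d,
      (∑' t : Fin (n+1) → V d, F (consEquiv n (y, t))) = if y = x then (∑' t, H t) else 0 := by
    intro y
    by_cases hyx : y = x
    · subst hyx
      rw [if_pos rfl]
      apply tsum_congr
      intro t
      rw [hcons, hF, hH]
      simp only []
      set γ : Fin (n+2) → V d := Fin.cons y t with hγ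
      have hcond : (γ 0 = y ∧ (∀ i : Fin (n+1), γ i.castSucc ∈ Λ) ∧
          γ (Fin.last (n+1)) ∉ Λ)
          ↔ ((∀ i : Fin n, t i.castSucc ∈ Λ) ∧ t (Fin.last n) ∉ Λ) := by
        rw [hγ]
        constructor
        · rintro ⟨-, hin, hlast⟩
          refine ⟨fun i => ?_, ?_⟩
          · have := hin i.succ
            rwa [← Fin.succ_castSucc, Fin.cons_succ] at this
          · rwa [← Fin.succ_last, Fin.cons_succ] at hlast
        · rintro ⟨hin, hlast⟩
          refine ⟨Fin.cons_zero _ _, fun i => ?_, ?_⟩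
          · rcases Fin.eq_zero_or_eq_succ i with h0 | ⟨j, hj⟩
            · rw [h0, Fin.castSucc_zero, Fin.cons_zero]; exact hx
            · rw [hj, ← Fin.succ_castSucc, Fin.cons_succ]; exact hin j
          · rwa [← Fin.succ_last, Fin.cons_succ]
      by_cases hc : (∀ i : Fin n, t i.castSucc ∈ Λ) ∧ t (Fin.last n) ∉ Λ
      · rw [if_pos (hcond.mpr hc), if_pos hc, hγ, pathWt_cons]
      · rw [if_neg (fun hcc => hc (hcond.mp hcc)), if_neg hc]
    · rw [if_neg hyx]
      convert tsum_zero with t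
      rw [hcons, hF]
      simp only []
      rw [if_neg]
      rintro ⟨h0, -, -⟩
      exact hyx (by rwa [Fin.cons_zero] at h0)
  have hLHS : g k Λ (n+1) x = ∑' t, H t := by
    have hgF : g k Λ (n+1) x = ∑' γ, F γ := by rw [hF]; rfl
    calc g k Λ (n+1) x = ∑' γ, F γ := hgF
      _ = ∑' p : V d × (Fin (n+1) → V d), F (consEquiv n p) := ((consEquiv n).tsum_eq F).symm
      _ = ∑' (y : V d) (t : Fin (n+1) → V d), F (consEquiv n (y, t)) :=
          hsum.tsum_prod' hsum.prod_factor
      _ = ∑' y : V d, (if y = x then (∑' t, H t) else 0) := tsum_congr hinner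
      _ = ∑' t, H t := tsum_ite_eq x _
  rw [hLHS]
  have hRHS : ∀ y ∈ nbrsF x, stepWt k x y * g k Λ n y
      = ∑' t : Fin (n+1) → V d,
          (if t 0 = y ∧ (∀ i : Fin n, t i.castSucc ∈ Λ) ∧ t (Fin.last n) ∉ Λ
            then stepWt k x y * pathWt k n t else 0) := by
    intro y _
    unfold g
    rw [← tsum_mul_left]
    exact tsum_congr fun t => by rw [mul_ite, mul_zero]
  rw [Finset.sum_congr rfl hRHS,
    ← Summable.tsum_finsetSum (fun y _ => ((summable_g_inner k Λ n y).mul_left (stepWt k x y)).congr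
      (fun t => by rw [mul_ite, mul_zero]))]
  apply tsum_congr
  intro t
  rw [hH]
  simp only []
  by_cases hC : (∀ i : Fin n, t i.castSucc ∈ Λ) ∧ t (Fin.last n) ∉ Λ
  · have hsummand : ∀ y ∈ nbrsF x,
        (if t 0 = y ∧ (∀ i : Fin n, t i.castSucc ∈ Λ) ∧ t (Fin.last n) ∉ Λ
          then stepWt k x y * pathWt k n t else 0)
        = if t 0 = y then stepWt k x y * pathWt k n t else 0 := by
      intro y _
      exact if_congr ⟨fun h => h.1, fun h => ⟨h, hC⟩⟩ rfl rfl
    rw [Finset.sum_congr rfl hsummand, Finset.sum_ite_eq, if_pos hC]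
    by_cases hmem : t 0 ∈ nbrsF x
    · rw [if_pos hmem]
    · rw [if_neg hmem, stepWt_eq_zero (not_isNbr_of_not_mem hmem), zero_mul]
  · rw [if_neg hC, Finset.sum_eq_zero]
    intro y _
    rw [if_neg]
    exact fun h => hC h.2

lemma sum_range_g_le_one {k : V d → ℝ} (hk : ∀ x, k x ∈ Set.Icc (0:ℝ) 1) (hd : 0 < d)
    (Λ : Set (V d)) : ∀ (N : ℕ) (x : V d), ∑ n ∈ Finset.range N, g k Λ n x ≤ 1 := by
  intro N
  induction N with
  | zero => intro x; simp
  | succ N ih =>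
      intro x
      rw [Finset.sum_range_succ']
      by_cases hx : x ∈ Λ
      · have h0 : g k Λ 0 x = 0 := by rw [g_zero, if_pos hx]
        rw [h0, add_zero]
        have : ∀ n ∈ Finset.range N, g k Λ (n+1) x
            = ∑ y ∈ nbrsF x, stepWt k x y * g k Λ n y := fun n _ => g_succ hx
        rw [Finset.sum_congr rfl this, Finset.sum_comm]
        calc ∑ y ∈ nbrsF x, ∑ n ∈ Finset.range N, stepWt k x y * g k Λ n y
            = ∑ y ∈ nbrsF x, stepWt k x y * ∑ n ∈ Finset.range N, g k Λ n y := by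
              refine Finset.sum_congr rfl fun y _ => ?_
              rw [Finset.mul_sum]
          _ ≤ ∑ y ∈ nbrsF x, (1 / (2 * (d:ℝ))) * 1 := by
              refine Finset.sum_le_sum fun y _ => ?_
              refine mul_le_mul (stepWt_le hk hd x y) (ih y) ?_ (by positivity)
              refine Finset.sum_nonneg fun n _ => g_nonneg hk Λ n y
          _ ≤ 1 := by
              rw [Finset.sum_const, nsmul_eq_mul]
              have hcard : ((nbrsF x).card : ℝ) ≤ 2 * d := by
                have := card_nbrsF_le x
                push_cast
                exact_mod_cast this
              have h2d : (0:ℝ) < 2 * d := by positivity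
              calc ((nbrsF x).card : ℝ) * (1 / (2 * (d:ℝ)) * 1)
                    ≤ (2 * d) * (1 / (2 * d)) := by
                    rw [mul_one]
                    apply mul_le_mul_of_nonneg_right hcard (by positivity)
                _ = 1 := by field_simp
      · have h0 : g k Λ 0 x = 1 := by rw [g_zero, if_neg hx]
        have hz : ∀ n ∈ Finset.range N, g k Λ (n+1) x = 0 := fun n _ => g_succ_not_mem k n hx
        rw [Finset.sum_congr rfl hz, h0, Finset.sum_const, smul_zero, zero_add]

lemma summable_g {k : V d → ℝ} (hk : ∀ x, k x ∈ Set.Icc (0:ℝ) 1) (hd : 0 < d)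
    (Λ : Set (V d)) (x : V d) : Summable (fun n => g k Λ n x) :=
  summable_of_sum_range_le (fun n => g_nonneg hk Λ n x) (fun N => sum_range_g_le_one hk hd Λ N x)

lemma exitProb_nonneg {k : V d → ℝ} (hk : ∀ x, k x ∈ Set.Icc (0:ℝ) 1) (Λ : Set (V d))
    (x : V d) : 0 ≤ exitProb k Λ x := by
  rw [exitProb_eq_tsum_g]
  exact tsum_nonneg fun n => g_nonneg hk Λ n x

lemma g_le_exitProb {k : V d → ℝ} (hk : ∀ x, k x ∈ Set.Icc (0:ℝ) 1) (hd : 0 < d)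
    (Λ : Set (V d)) (x : V d) (n : ℕ) : g k Λ n x ≤ exitProb k Λ x := by
  rw [exitProb_eq_tsum_g]
  exact (summable_g hk hd Λ x).le_tsum n (fun m _ => g_nonneg hk Λ m x)

lemma exitProb_eq_zero_of_k_one {k : V d → ℝ} {Λ : Set (V d)} {x : V d}
    (hk1 : k x = 1) (hx : x ∈ Λ) : exitProb k Λ x = 0 := by
  rw [exitProb_eq_tsum_g]
  convert tsum_zero with n
  match n with
  | 0 => rw [g_zero, if_pos hx]
  | (m+1) =>
      unfold g
      convert tsum_zero with γ
      by_cases hc : γ 0 = x ∧ (∀ i : Fin (m+1), γ i.castSucc ∈ Λ) ∧ γ (Fin.last (m+1)) ∉ Λ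
      · rw [if_pos hc]
        unfold pathWt
        apply Finset.prod_eq_zero (Finset.mem_univ (0 : Fin (m+1)))
        unfold stepWt
        rw [Fin.castSucc_zero, hc.1, hk1]
        split <;> simp
      · rw [if_neg hc]

lemma exitProb_harmonic {k : V d → ℝ} (hk : ∀ x, k x ∈ Set.Icc (0:ℝ) 1) (hd : 0 < d)
    {Λ : Set (V d)} {x : V d} (hx : x ∈ Λ) :
    exitProb k Λ x = ∑ y ∈ nbrsF x, stepWt k x y * exitProb k Λ y := by
  rw [exitProb_eq_tsum_g, (summable_g hk hd Λ x).tsum_eq_zero_add]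
  rw [g_zero, if_pos hx, zero_add]
  have : ∀ n : ℕ, g k Λ (n+1) x = ∑ y ∈ nbrsF x, stepWt k x y * g k Λ n y :=
    fun n => g_succ hx
  rw [tsum_congr this, Summable.tsum_finsetSum (fun y _ => (summable_g hk hd Λ y).mul_left (stepWt k x y))]
  refine Finset.sum_congr rfl fun y _ => ?_
  rw [tsum_mul_left, exitProb_eq_tsum_g]

/-- `x ∈ Ek` implies `k x < 1`. -/
lemma k_lt_one_of_mem_Ek {k : V d → ℝ} {x : V d} (hx : x ∈ Ek k) : k x < 1 := by
  obtain ⟨p, hp0, -, hklt, -⟩ := hx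
  have := hklt 0
  rwa [hp0] at this

/-- Positivity of the exit probability from points of `Ek`. -/
lemma exitProb_pos {k : V d → ℝ} (hk : ∀ x, k x ∈ Set.Icc (0:ℝ) 1) (hd : 0 < d)
    {Λ : Set (V d)} (hΛ : Λ.Finite) {x : V d} (hx : x ∈ Ek k) : 0 < exitProb k Λ x := by
  obtain ⟨p, hp0, hnbr, hklt, htend⟩ := hx
  have hex : ∃ n, p n ∉ Λ := by
    have hbdd : ∃ B : ℝ, ∀ z ∈ Λ, znorm z ≤ B := by
      obtain ⟨B, hB⟩ := (hΛ.image znorm).bddAbove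
      exact ⟨B, fun z hz => hB (Set.mem_image_of_mem _ hz)⟩
    obtain ⟨B, hB⟩ := hbdd
    obtain ⟨N, hN⟩ := ((Filter.tendsto_atTop.mp htend) (B + 1)).exists
    refine ⟨N, fun hmem => ?_⟩
    have := hB _ hmem
    linarith
  classical
  set N := Nat.find hex with hN
  have hNout : p N ∉ Λ := Nat.find_spec hex
  have hNin : ∀ m, m < N → p m ∈ Λ := fun m hm => not_not.mp (Nat.find_min hex hm)
  set γ : Fin (N+1) → V d := fun i => p i with hγ
  have hwpos : 0 < pathWt k N γ := by
    unfold pathWt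
    apply Finset.prod_pos
    intro i _
    have hnb : IsNbr (γ i.castSucc) (γ i.succ) := by
      rw [hγ]
      simp only [Fin.coe_castSucc, Fin.val_succ]
      exact hnbr i
    unfold stepWt
    rw [if_pos hnb]
    have : k (γ i.castSucc) < 1 := by
      rw [hγ]; exact hklt i
    apply div_pos (by linarith) (by positivity)
  have hterm : pathWt k N γ ≤ g k Λ N (p 0) := by
    unfold g
    have hcond : γ 0 = p 0 ∧ (∀ i : Fin N, γ i.castSucc ∈ Λ) ∧ γ (Fin.last N) ∉ Λ := by
      refine ⟨rfl, fun i => ?_, ?_⟩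
      · rw [hγ]
        simp only [Fin.coe_castSucc]
        exact hNin i i.isLt
      · rw [hγ]
        simpa using hNout
    calc pathWt k N γ = if γ 0 = p 0 ∧ (∀ i : Fin N, γ i.castSucc ∈ Λ) ∧ γ (Fin.last N) ∉ Λ
          then pathWt k N γ else 0 := (if_pos hcond).symm
      _ ≤ _ := (summable_g_inner k Λ N (p 0)).le_tsum γ
          (fun γ' _ => by
            split
            · exact pathWt_nonneg hk N γ'
            · exact le_refl _)
  have := hterm.trans (g_le_exitProb hk hd Λ (p 0) N)
  rw [hp0] at this
  linarith

/-- The box exhaustion. -/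
def box (d : ℕ) (R : ℕ) : Set (V d) := {z | ∀ i, |z i| ≤ (R:ℤ)}

lemma box_finite (d R : ℕ) : (box d R).Finite := by
  have : box d R ⊆ Set.pi Set.univ (fun _ : Fin d => Set.Icc (-(R:ℤ)) (R:ℤ)) := by
    intro z hz i _
    exact abs_le.mp (hz i)
  exact Set.Finite.subset (Set.Finite.pi fun i => Set.finite_Icc _ _) this

lemma box_isExhaustion (d : ℕ) : IsExhaustion (box d) := by
  refine ⟨box_finite d, fun R S hRS z hz i => ?_, fun x => ?_⟩
  · exact (hz i).trans (by exact_mod_cast Nat.cast_le.mpr hRS)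
  · refine ⟨Finset.univ.sup fun i => (x i).natAbs, fun i => ?_⟩
    rw [Int.abs_eq_natAbs]
    exact_mod_cast Finset.le_sup (f := fun i => (x i).natAbs) (Finset.mem_univ i)

/-- A neighbour of a point of `Ek` with sub-unit killing rate is in `Ek`. -/
lemma nbr_mem_Ek {k : V d → ℝ} {x y : V d} (hx : x ∈ Ek k) (hnb : IsNbr x y)
    (hky : k y < 1) : y ∈ Ek k := by
  obtain ⟨p, hp0, hnbr, hklt, htend⟩ := hx
  refine ⟨fun n => Nat.rec y (fun m _ => p m) n, rfl, ?_, ?_, ?_⟩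
  · intro i
    match i with
    | 0 =>
        show IsNbr y (p 0)
        rw [hp0]
        exact isNbr_symm hnb
    | (m+1) => exact hnbr m
  · intro i
    match i with
    | 0 => exact hky
    | (m+1) => exact hklt m
  · rw [Filter.tendsto_atTop] at htend ⊢
    intro b
    obtain ⟨N, hN⟩ := Filter.eventually_atTop.mp (htend b)
    refine Filter.eventually_atTop.mpr ⟨N+1, fun i hi => ?_⟩
    match i, hi with
    | (m+1), hi =>
        show b ≤ znorm (p m)
        exact hN m (by omega)


/-- If the killed random walk conditioned to exit `Λ_R` before dying converges
in distribution (finite-dimensional distributions) to a limit independent of the exhaustion, then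
there exists a function `a`, positive on `E_k`, which is the ratio limit of exit probabilities for
every exhaustion, and `a` is massive harmonic on `E_k`. -/
theorem ratio_limit_of_conditioned_converges {d : ℕ} (hd : 2 ≤ d)
    (k : V d → ℝ) (hk : ∀ x, k x ∈ Set.Icc (0 : ℝ) 1) (hconn : EkConnected k)
    (L : (n : ℕ) → (Fin (n + 1) → V d) → ℝ)
    (hcv : ∀ Λ : ℕ → Set (V d), IsExhaustion Λ → ∀ (n : ℕ) (s : Fin (n + 1) → V d),
      (∀ i, s i ∈ Ek k) →
      Filter.Tendsto (fun R => jointExitProb k (Λ R) n s / exitProb k (Λ R) (s 0))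
        Filter.atTop (nhds (L n s))) :
    ∃ a : V d → ℝ, (∀ x ∈ Ek k, 0 < a x) ∧
      (∀ Λ : ℕ → Set (V d), IsExhaustion Λ → ∀ x ∈ Ek k, ∀ y ∈ Ek k,
        Filter.Tendsto (fun R => exitProb k (Λ R) y / exitProb k (Λ R) x)
          Filter.atTop (nhds (a y / a x))) ∧
      (∀ x ∈ Ek k, a x = (1 - k x) / (2 * d) * ∑' y : V d, if IsNbr x y then a y else 0) := by
  classical
  have hdpos : 0 < d := by omega
  by_cases hEk : (Ek k).Nonempty
  swap
  · refine ⟨fun _ => 1, ?_, ?_, ?_⟩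
    · exact fun x hx => absurd ⟨x, hx⟩ hEk
    · exact fun Λ hΛ x hx => absurd ⟨x, hx⟩ hEk
    · exact fun x hx => absurd ⟨x, hx⟩ hEk
  obtain ⟨x0, hx0⟩ := hEk
  -- Step A: ratio convergence between points of `Ek`, with a limit independent of the exhaustion
  have A : ∀ x ∈ Ek k, ∀ y ∈ Ek k, ∃ c : ℝ, 0 ≤ c ∧ ∀ Λ, IsExhaustion Λ →
      Filter.Tendsto (fun R => exitProb k (Λ R) y / exitProb k (Λ R) x)
        Filter.atTop (nhds c) := by
    intro x hx y hy
    obtain ⟨n, p, hp0, hplast, hpstep, hpmem⟩ := hconn x hx y hy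
    have hw : 0 < pathWt k n p := by
      unfold pathWt
      apply Finset.prod_pos
      intro i _
      unfold stepWt
      rw [if_pos (hpstep i)]
      have := k_lt_one_of_mem_Ek (hpmem i.castSucc)
      apply div_pos (by linarith) (by positivity)
    have hcvΛ : ∀ Λ, IsExhaustion Λ →
        Filter.Tendsto (fun R => exitProb k (Λ R) y / exitProb k (Λ R) x)
          Filter.atTop (nhds (L n p / pathWt k n p)) := by
      intro Λ hΛ
      have h1 := hcv Λ hΛ n p hpmem
      have hev : ∀ᶠ R in Filter.atTop, ∀ i, p i ∈ Λ R := by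
        rw [Filter.eventually_all]
        intro i
        obtain ⟨R0, hR0⟩ := hΛ.2.2 (p i)
        exact Filter.eventually_atTop.mpr ⟨R0, fun R hR => hΛ.2.1 hR hR0⟩
      have heq : (fun R => jointExitProb k (Λ R) n p / exitProb k (Λ R) (p 0)) =ᶠ[Filter.atTop]
          (fun R => pathWt k n p * (exitProb k (Λ R) y / exitProb k (Λ R) x)) := by
        filter_upwards [hev] with R hR
        unfold jointExitProb
        rw [if_pos hR, hplast, hp0, mul_div_assoc]
      have h2 := h1.congr' heq
      have h3 := h2.const_mul (pathWt k n p)⁻¹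
      have h4 := h3.congr (fun R => inv_mul_cancel_left₀ (ne_of_gt hw) _)
      rwa [inv_mul_eq_div] at h4
    refine ⟨L n p / pathWt k n p, ?_, hcvΛ⟩
    refine ge_of_tendsto (hcvΛ (box d) (box_isExhaustion d)) ?_
    exact Filter.Eventually.of_forall fun R =>
      div_nonneg (exitProb_nonneg hk _ y) (exitProb_nonneg hk _ x)
  -- Step B: the definition of `a`
  have C1 : ∀ y : V d, ∃ c : ℝ, 0 ≤ c ∧
      (y ∈ Ek k → ∀ Λ, IsExhaustion Λ →
        Filter.Tendsto (fun R => exitProb k (Λ R) y / exitProb k (Λ R) x0)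
          Filter.atTop (nhds c)) ∧
      (y ∉ Ek k → c = 0) := by
    intro y
    by_cases hy : y ∈ Ek k
    · obtain ⟨c, hc0, hc⟩ := A x0 hx0 y hy
      exact ⟨c, hc0, fun _ => hc, fun h => absurd hy h⟩
    · exact ⟨0, le_refl 0, fun h => absurd h hy, fun _ => rfl⟩
  choose a ha0 ha1 ha2 using C1
  -- Step C: positivity
  have hapos : ∀ x ∈ Ek k, 0 < a x := by
    intro x hx
    obtain ⟨b, hb0, hb⟩ := A x hx x0 hx0
    have h1 : Filter.Tendsto (fun R => (exitProb k (box d R) x / exitProb k (box d R) x0) *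
        (exitProb k (box d R) x0 / exitProb k (box d R) x)) Filter.atTop (nhds (a x * b)) :=
      (ha1 x hx (box d) (box_isExhaustion d)).mul (hb (box d) (box_isExhaustion d))
    have hfun : ∀ R : ℕ, (exitProb k (box d R) x / exitProb k (box d R) x0) *
        (exitProb k (box d R) x0 / exitProb k (box d R) x) = 1 := by
      intro R
      have hu := (exitProb_pos hk hdpos (box_finite d R) hx).ne'
      have hv := (exitProb_pos hk hdpos (box_finite d R) hx0).ne'
      field_simp
    have hone : a x * b = 1 :=
      tendsto_nhds_unique (h1.congr hfun) tendsto_const_nhds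
    have hne : a x ≠ 0 := by
      intro h0
      rw [h0, zero_mul] at hone
      exact zero_ne_one hone
    exact lt_of_le_of_ne (ha0 x) (Ne.symm hne)
  -- Step D: the ratio limit statement
  have hratio : ∀ Λ, IsExhaustion Λ → ∀ x ∈ Ek k, ∀ y ∈ Ek k,
      Filter.Tendsto (fun R => exitProb k (Λ R) y / exitProb k (Λ R) x)
        Filter.atTop (nhds (a y / a x)) := by
    intro Λ hΛ x hx y hy
    have h3 := (ha1 y hy Λ hΛ).div (ha1 x hx Λ hΛ) (ne_of_gt (hapos x hx))
    refine h3.congr fun R => ?_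
    have hu := (exitProb_pos hk hdpos (hΛ.1 R) hx).ne'
    have hv := (exitProb_pos hk hdpos (hΛ.1 R) hx0).ne'
    simp only [Pi.div_apply]
    field_simp
  -- Step E: massive harmonicity
  have hharm : ∀ x ∈ Ek k, a x
      = (1 - k x) / (2 * d) * ∑' y : V d, if IsNbr x y then a y else 0 := by
    intro x hx
    have hL := ha1 x hx (box d) (box_isExhaustion d)
    have hterm : ∀ y ∈ nbrsF x, Filter.Tendsto (fun R => stepWt k x y *
        (exitProb k (box d R) y / exitProb k (box d R) x0)) Filter.atTop
        (nhds (stepWt k x y * a y)) := by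
      intro y _
      by_cases hnb : IsNbr x y
      · by_cases hy : y ∈ Ek k
        · exact (ha1 y hy (box d) (box_isExhaustion d)).const_mul _
        · have hky : k y = 1 := by
            by_contra hne
            exact hy (nbr_mem_Ek hx hnb (lt_of_le_of_ne (hk y).2 hne))
          rw [ha2 y hy, mul_zero]
          obtain ⟨R0, hR0⟩ := (box_isExhaustion d).2.2 y
          have hev : (fun _ : ℕ => (0:ℝ)) =ᶠ[Filter.atTop] (fun R => stepWt k x y *
              (exitProb k (box d R) y / exitProb k (box d R) x0)) := by
            refine Filter.eventually_atTop.mpr ⟨R0, fun R hR => ?_⟩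
            show (0:ℝ) = stepWt k x y * (exitProb k (box d R) y / exitProb k (box d R) x0)
            rw [exitProb_eq_zero_of_k_one hky ((box_isExhaustion d).2.1 hR hR0), zero_div,
              mul_zero]
          exact tendsto_const_nhds.congr' hev
      · have hz : stepWt k x y = 0 := stepWt_eq_zero hnb
        rw [hz]
        simpa using tendsto_const_nhds
    have hsum := tendsto_finset_sum (nbrsF x) hterm
    obtain ⟨R0, hR0⟩ := (box_isExhaustion d).2.2 x
    have hev : (fun R => exitProb k (box d R) x / exitProb k (box d R) x0) =ᶠ[Filter.atTop]
        (fun R => ∑ y ∈ nbrsF x,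
          stepWt k x y * (exitProb k (box d R) y / exitProb k (box d R) x0)) := by
      refine Filter.eventually_atTop.mpr ⟨R0, fun R hR => ?_⟩
      show exitProb k (box d R) x / exitProb k (box d R) x0
          = ∑ y ∈ nbrsF x, stepWt k x y * (exitProb k (box d R) y / exitProb k (box d R) x0)
      rw [exitProb_harmonic hk hdpos ((box_isExhaustion d).2.1 hR hR0), Finset.sum_div]
      exact Finset.sum_congr rfl fun y _ => (mul_div_assoc _ _ _)
    have hax : a x = ∑ y ∈ nbrsF x, stepWt k x y * a y :=
      tendsto_nhds_unique (hL.congr' hev) hsum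
    rw [hax]
    have hpt : ∀ y ∈ nbrsF x, stepWt k x y * a y
        = (1 - k x) / (2 * (d:ℝ)) * (if IsNbr x y then a y else 0) := by
      intro y _
      unfold stepWt
      by_cases hnb : IsNbr x y
      · rw [if_pos hnb, if_pos hnb]
      · rw [if_neg hnb, if_neg hnb, zero_mul, mul_zero]
    rw [Finset.sum_congr rfl hpt, ← Finset.mul_sum]
    congr 1
    exact (tsum_eq_sum (fun y hy => if_neg (not_isNbr_of_not_mem hy))).symm
  exact ⟨a, hapos, hratio, hharm⟩

end KRW
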